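/- Let g' ≥ 0 and set k = 2g' + 2 and n = 2k = 4g' + 4. In the braid group B_n, let Δ_n = (σ₁σ₂⋯σ_{n−1})(σ₁⋯σ_{n−2})⋯(σ₁σ₂)(σ₁) be the Garside half-twist, let T₁ = (σ₁σ₂⋯σ_{k−1})^k be the full twist on the first k strands, and let T₂ = (σ_{k+1}σ_{k+2}⋯σ_{n−1})^k be the full twist on the last k strands. Then the element Δ_n * T₁⁻¹ * T₂⁻¹ is quasipositive: it can be written as a product of k elements of B_n, each of which is conjugate in B_n to one of the standard generators σ_i. -/

import Mathlib

/-- The braid relations on generators `σ₁, …, σ_m` (indexed by `Fin m`):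
far-apart generators commute, and adjacent generators satisfy the braid relation.
The corresponding presented group is the braid group on `m + 1` strands. -/
def braidRels (m : ℕ) : Set (FreeGroup (Fin m)) :=
  { r | (∃ i j : Fin m, (i : ℕ) + 2 ≤ (j : ℕ) ∧
          r = FreeGroup.of i * FreeGroup.of j * (FreeGroup.of i)⁻¹ * (FreeGroup.of j)⁻¹) ∨
        (∃ i j : Fin m, (j : ℕ) = (i : ℕ) + 1 ∧
          r = FreeGroup.of i * FreeGroup.of j * FreeGroup.of i *
              (FreeGroup.of j * FreeGroup.of i * FreeGroup.of j)⁻¹) }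

/-- The braid group `B_n` on `n` strands, presented with generators
`σ₁, …, σ_{n-1}` (indexed by `Fin (n-1)`) and the braid relations. -/
abbrev BraidGroup (n : ℕ) := PresentedGroup (braidRels (n - 1))

/-- The standard generator `σ_{i+1}` of `B_n` (so `braidGen n 0 = σ₁`, etc.);
equal to `1` for out-of-range indices. -/
def braidGen (n : ℕ) (i : ℕ) : BraidGroup n :=
  if h : i < n - 1 then PresentedGroup.of (⟨i, h⟩ : Fin (n - 1)) else 1

/-- The partial chain `σ₁ σ₂ ⋯ σ_l` in `B_n`. -/
def braidChain (n : ℕ) (l : ℕ) : BraidGroup n :=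
  ((List.range l).map (braidGen n)).prod

/-- The Garside half-twist
`Δ_n = (σ₁ σ₂ ⋯ σ_{n-1})(σ₁ ⋯ σ_{n-2}) ⋯ (σ₁ σ₂)(σ₁)` in `B_n`. -/
def garside (n : ℕ) : BraidGroup n :=
  ((List.range (n - 1)).map fun j => braidChain n (n - 1 - j)).prod

namespace BraidQP
variable {n : ℕ}

lemma rel_eq_one {r : FreeGroup (Fin (n-1))} (hr : r ∈ braidRels (n-1)) :
    (QuotientGroup.mk r : BraidGroup n) = 1 := by
  rw [QuotientGroup.eq_one_iff]
  exact Subgroup.subset_normalClosure hr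

lemma braid_comm (i j : ℕ) (hij : i + 2 ≤ j) :
    braidGen n i * braidGen n j = braidGen n j * braidGen n i := by
  unfold braidGen
  by_cases hj : j < n - 1
  · have hi : i < n - 1 := by omega
    rw [dif_pos hi, dif_pos hj]
    have hr : (FreeGroup.of (⟨i,hi⟩ : Fin (n-1)) * FreeGroup.of (⟨j,hj⟩ : Fin (n-1)) *
        (FreeGroup.of (⟨i,hi⟩ : Fin (n-1)))⁻¹ * (FreeGroup.of (⟨j,hj⟩ : Fin (n-1)))⁻¹)
        ∈ braidRels (n-1) := Or.inl ⟨⟨i,hi⟩, ⟨j,hj⟩, hij, rfl⟩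
    have h1 := rel_eq_one (n := n) hr
    simp only [QuotientGroup.mk_mul, QuotientGroup.mk_inv] at h1
    have h2 : (QuotientGroup.mk (FreeGroup.of (⟨i,hi⟩ : Fin (n-1))) : BraidGroup n) = PresentedGroup.of ⟨i,hi⟩ := rfl
    have h3 : (QuotientGroup.mk (FreeGroup.of (⟨j,hj⟩ : Fin (n-1))) : BraidGroup n) = PresentedGroup.of ⟨j,hj⟩ := rfl
    rw [h2, h3] at h1
    replace h1 : (PresentedGroup.of ⟨i,hi⟩ * PresentedGroup.of ⟨j,hj⟩ * (PresentedGroup.of ⟨i,hi⟩)⁻¹ *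
        (PresentedGroup.of ⟨j,hj⟩)⁻¹ : BraidGroup n) = 1 := h1
    rw [mul_inv_eq_one, mul_inv_eq_iff_eq_mul] at h1
    exact h1
  · rw [dif_neg hj]
    by_cases hi : i < n - 1
    · rw [dif_pos hi, mul_one, one_mul]
    · rw [dif_neg hi]



lemma braid_braid (i : ℕ) (h : i + 2 ≤ n - 1) :
    braidGen n i * braidGen n (i+1) * braidGen n i
      = braidGen n (i+1) * braidGen n i * braidGen n (i+1) := by
  have hi : i < n - 1 := by omega
  have hi1 : i + 1 < n - 1 := by omega
  unfold braidGen
  rw [dif_pos hi, dif_pos hi1]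
  have hr : (FreeGroup.of (⟨i,hi⟩ : Fin (n-1)) * FreeGroup.of (⟨i+1,hi1⟩ : Fin (n-1)) *
      FreeGroup.of (⟨i,hi⟩ : Fin (n-1)) *
      (FreeGroup.of (⟨i+1,hi1⟩ : Fin (n-1)) * FreeGroup.of (⟨i,hi⟩ : Fin (n-1)) *
        FreeGroup.of (⟨i+1,hi1⟩ : Fin (n-1)))⁻¹) ∈ braidRels (n-1) :=
    Or.inr ⟨⟨i,hi⟩, ⟨i+1,hi1⟩, rfl, rfl⟩
  have h1 := rel_eq_one (n := n) hr
  simp only [QuotientGroup.mk_mul, QuotientGroup.mk_inv] at h1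
  rw [mul_inv_eq_one] at h1
  exact h1

/-- ascending chain `σ_s σ_{s+1} ⋯ σ_{s+l-1}` -/
def chain (n s l : ℕ) : BraidGroup n :=
  ((List.range l).map (fun i => braidGen n (s+i))).prod

/-- descending chain `σ_{s+l-1} ⋯ σ_{s+1} σ_s` -/
def dchain (n s l : ℕ) : BraidGroup n :=
  ((List.range l).map (fun i => braidGen n (s+l-1-i))).prod

/-- half twist on `m` strands `s+1, …, s+m` -/
def twist (n s m : ℕ) : BraidGroup n :=
  ((List.range (m-1)).map (fun j => chain n s (m-1-j))).prod

@[simp] lemma chain_zero (s : ℕ) : chain n s 0 = 1 := rfl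

@[simp] lemma dchain_zero (s : ℕ) : dchain n s 0 = 1 := rfl

@[simp] lemma twist_zero (s : ℕ) : twist n s 0 = 1 := rfl

@[simp] lemma twist_one (s : ℕ) : twist n s 1 = 1 := rfl

lemma chain_succ (s l : ℕ) : chain n s (l+1) = chain n s l * braidGen n (s+l) := by
  unfold chain
  rw [List.range_succ, List.map_append, List.prod_append]
  simp

lemma chain_cons (s l : ℕ) : chain n s (l+1) = braidGen n s * chain n (s+1) l := by
  unfold chain
  rw [List.range_succ_eq_map, List.map_cons, List.prod_cons, List.map_map]
  congr 1
  refine congrArg List.prod (List.map_congr_left ?_)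
  intro i hi
  rw [List.mem_range] at hi
  show braidGen n (s + (i+1)) = braidGen n (s+1+i)
  congr 1
  omega

@[simp] lemma chain_one (s : ℕ) : chain n s 1 = braidGen n s := by
  rw [chain_succ, chain_zero, one_mul, Nat.add_zero]

lemma dchain_cons (s l : ℕ) : dchain n s (l+1) = braidGen n (s+l) * dchain n s l := by
  unfold dchain
  rw [List.range_succ_eq_map, List.map_cons, List.prod_cons, List.map_map]
  congr 1
  refine congrArg List.prod (List.map_congr_left ?_)
  intro i hi
  rw [List.mem_range] at hi
  show braidGen n (s + (l+1) - 1 - (i+1)) = braidGen n (s + l - 1 - i)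
  congr 1
  omega

lemma dchain_snoc (s l : ℕ) : dchain n s (l+1) = dchain n (s+1) l * braidGen n s := by
  unfold dchain
  rw [List.range_succ, List.map_append, List.prod_append]
  congr 1
  · congr 1; apply List.map_congr_left; intro i hi
    rw [List.mem_range] at hi
    congr 1; omega
  · simp

@[simp] lemma dchain_one (s : ℕ) : dchain n s 1 = braidGen n s := by
  rw [dchain_snoc, dchain_zero, one_mul]

lemma chain_append (s a b : ℕ) : chain n s (a+b) = chain n s a * chain n (s+a) b := by
  induction b with
  | zero => simp
  | succ b ih =>
      rw [show a + (b+1) = (a+b)+1 from rfl, chain_succ, ih, chain_succ, mul_assoc]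
      congr 3
      omega

lemma dchain_append (s a b : ℕ) : dchain n s (a+b) = dchain n (s+a) b * dchain n s a := by
  induction b with
  | zero => simp
  | succ b ih =>
      rw [show a + (b+1) = (a+b)+1 from rfl, dchain_cons, ih, dchain_cons, mul_assoc]
      congr 2
      omega

lemma twist_succ (s m : ℕ) : twist n s (m+1) = chain n s m * twist n s m := by
  cases m with
  | zero => simp [twist]
  | succ t =>
      unfold twist
      rw [Nat.succ_sub_one, Nat.succ_sub_one, List.range_succ_eq_map, List.map_cons,
        List.prod_cons, List.map_map]
      congr 1
      refine congrArg List.prod (List.map_congr_left ?_)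
      intro i hi
      rw [List.mem_range] at hi
      show chain n s (t + 1 - (i+1)) = chain n s (t - i)
      congr 1
      omega



lemma comm_gen_chain (t s l : ℕ) (h : t + 2 ≤ s ∨ s + l + 1 ≤ t) :
    Commute (braidGen n t) (chain n s l) := by
  apply Commute.list_prod_right
  intro x hx
  simp only [List.mem_map, List.mem_range] at hx
  obtain ⟨i, hi, rfl⟩ := hx
  rcases h with h | h
  · exact braid_comm t (s+i) (by omega)
  · exact (show Commute (braidGen n (s+i)) (braidGen n t) from braid_comm (s+i) t (by omega)).symm

lemma comm_gen_dchain (t s l : ℕ) (h : t + 2 ≤ s ∨ s + l + 1 ≤ t) :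
    Commute (braidGen n t) (dchain n s l) := by
  apply Commute.list_prod_right
  intro x hx
  simp only [List.mem_map, List.mem_range] at hx
  obtain ⟨i, hi, rfl⟩ := hx
  rcases h with h | h
  · exact braid_comm t (s+l-1-i) (by omega)
  · exact (show Commute (braidGen n (s+l-1-i)) (braidGen n t) from
      braid_comm (s+l-1-i) t (by omega)).symm

lemma comm_gen_twist (t s m : ℕ) (h : t + 2 ≤ s ∨ s + m ≤ t) :
    Commute (braidGen n t) (twist n s m) := by
  apply Commute.list_prod_right
  intro x hx
  simp only [List.mem_map, List.mem_range] at hx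
  obtain ⟨j, hj, rfl⟩ := hx
  exact comm_gen_chain t s (m-1-j) (by omega)

lemma comm_chain_chain (s l u m : ℕ) (h : s + l + 1 ≤ u ∨ u + m + 1 ≤ s) :
    Commute (chain n s l) (chain n u m) := by
  apply Commute.list_prod_left
  intro x hx
  simp only [List.mem_map, List.mem_range] at hx
  obtain ⟨i, hi, rfl⟩ := hx
  exact comm_gen_chain (s+i) u m (by omega)

lemma comm_chain_dchain (s l u m : ℕ) (h : s + l + 1 ≤ u ∨ u + m + 1 ≤ s) :
    Commute (chain n s l) (dchain n u m) := by
  apply Commute.list_prod_left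
  intro x hx
  simp only [List.mem_map, List.mem_range] at hx
  obtain ⟨i, hi, rfl⟩ := hx
  exact comm_gen_dchain (s+i) u m (by omega)

lemma comm_dchain_dchain (s l u m : ℕ) (h : s + l + 1 ≤ u ∨ u + m + 1 ≤ s) :
    Commute (dchain n s l) (dchain n u m) := by
  apply Commute.list_prod_left
  intro x hx
  simp only [List.mem_map, List.mem_range] at hx
  obtain ⟨i, hi, rfl⟩ := hx
  exact comm_gen_dchain (s+l-1-i) u m (by omega)

lemma comm_chain_twist (s l u m : ℕ) (h : s + l + 1 ≤ u ∨ u + m ≤ s) :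
    Commute (chain n s l) (twist n u m) := by
  apply Commute.list_prod_left
  intro x hx
  simp only [List.mem_map, List.mem_range] at hx
  obtain ⟨i, hi, rfl⟩ := hx
  exact comm_gen_twist (s+i) u m (by omega)

lemma comm_dchain_twist (s l u m : ℕ) (h : s + l + 1 ≤ u ∨ u + m ≤ s) :
    Commute (dchain n s l) (twist n u m) := by
  apply Commute.list_prod_left
  intro x hx
  simp only [List.mem_map, List.mem_range] at hx
  obtain ⟨i, hi, rfl⟩ := hx
  exact comm_gen_twist (s+l-1-i) u m (by omega)

lemma comm_twist_twist (s m u m' : ℕ) (h : s + m ≤ u ∨ u + m' ≤ s) :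
    Commute (twist n s m) (twist n u m') := by
  apply Commute.list_prod_left
  intro x hx
  simp only [List.mem_map, List.mem_range] at hx
  obtain ⟨j, hj, rfl⟩ := hx
  exact comm_chain_twist s (m-1-j) u m' (by omega)

/-- slide a generator up through an ascending chain -/
lemma chain_slide (s l i : ℕ) (hi : i + 2 ≤ l) (hn : s + l + 1 ≤ n) :
    chain n s l * braidGen n (s+i) = braidGen n (s+i+1) * chain n s l := by
  obtain ⟨m, rfl⟩ : ∃ m, l = i + 2 + m := ⟨l - (i+2), by omega⟩
  have h1 : Commute (braidGen n (s+i)) (chain n (s+(i+2)) m) :=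
    comm_gen_chain (s+i) (s+(i+2)) m (Or.inl (by omega))
  have h3 : Commute (braidGen n (s+i+1)) (chain n s i) :=
    comm_gen_chain (s+i+1) s i (Or.inr (by omega))
  have hb := braid_braid (n := n) (s+i) (by omega)
  have e2 : chain n s (i+2) = chain n s i * braidGen n (s+i) * braidGen n (s+i+1) := by
    rw [show i+2 = (i+1)+1 from rfl, chain_succ, chain_succ]; rfl
  rw [chain_append s (i+2) m]
  calc chain n s (i+2) * chain n (s+(i+2)) m * braidGen n (s+i)
      = chain n s (i+2) * (braidGen n (s+i) * chain n (s+(i+2)) m) := by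
        rw [mul_assoc, ← h1.eq]
    _ = chain n s i * (braidGen n (s+i) * braidGen n (s+i+1) * braidGen n (s+i)) *
          chain n (s+(i+2)) m := by
        rw [e2]; group
    _ = chain n s i * (braidGen n (s+i+1) * braidGen n (s+i) * braidGen n (s+i+1)) *
          chain n (s+(i+2)) m := by rw [hb]
    _ = (chain n s i * braidGen n (s+i+1)) *
          (braidGen n (s+i) * braidGen n (s+i+1) * chain n (s+(i+2)) m) := by group
    _ = braidGen n (s+i+1) *
          (chain n s i * braidGen n (s+i) * braidGen n (s+i+1) * chain n (s+(i+2)) m) := by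
        rw [← h3.eq]; group
    _ = braidGen n (s+i+1) * (chain n s (i+2) * chain n (s+(i+2)) m) := by rw [e2]

/-- slide a generator down through a descending chain -/
lemma dchain_slide (s l i : ℕ) (hi : i + 2 ≤ l) (hn : s + l + 1 ≤ n) :
    dchain n s l * braidGen n (s+i+1) = braidGen n (s+i) * dchain n s l := by
  obtain ⟨m, rfl⟩ : ∃ m, l = i + 2 + m := ⟨l - (i+2), by omega⟩
  have h1 : Commute (braidGen n (s+i+1)) (dchain n s i) :=
    comm_gen_dchain (s+i+1) s i (Or.inr (by omega))
  have h3 : Commute (braidGen n (s+i)) (dchain n (s+(i+2)) m) :=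
    comm_gen_dchain (s+i) (s+(i+2)) m (Or.inl (by omega))
  have hb := braid_braid (n := n) (s+i) (by omega)
  have e2 : dchain n s (i+2) = braidGen n (s+i+1) * braidGen n (s+i) * dchain n s i := by
    rw [show i+2 = (i+1)+1 from rfl, dchain_cons, dchain_cons]
    show braidGen n (s+(i+1)) * (braidGen n (s+i) * dchain n s i) = _
    group
  rw [dchain_append s (i+2) m]
  calc dchain n (s+(i+2)) m * dchain n s (i+2) * braidGen n (s+i+1)
      = dchain n (s+(i+2)) m *
          (braidGen n (s+i+1) * braidGen n (s+i) * (dchain n s i * braidGen n (s+i+1))) := by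
        rw [e2]; group
    _ = dchain n (s+(i+2)) m *
          (braidGen n (s+i+1) * braidGen n (s+i) * (braidGen n (s+i+1) * dchain n s i)) := by
        rw [h1.eq]
    _ = dchain n (s+(i+2)) m *
          ((braidGen n (s+i+1) * braidGen n (s+i) * braidGen n (s+i+1)) * dchain n s i) := by
        group
    _ = dchain n (s+(i+2)) m *
          ((braidGen n (s+i) * braidGen n (s+i+1) * braidGen n (s+i)) * dchain n s i) := by
        rw [hb]
    _ = (dchain n (s+(i+2)) m * braidGen n (s+i)) *
          (braidGen n (s+i+1) * braidGen n (s+i) * dchain n s i) := by group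
    _ = braidGen n (s+i) * (dchain n (s+(i+2)) m * dchain n s (i+2)) := by
        rw [← h3.eq, e2]; group



/-- conjugating a shorter chain by a longer chain shifts it up -/
lemma chain_conj_chain (s L l : ℕ) (h : l + 1 ≤ L) (hn : s + L + 1 ≤ n) :
    chain n s L * chain n s l = chain n (s+1) l * chain n s L := by
  induction l with
  | zero => simp
  | succ l ih =>
      have h' : l + 1 ≤ L := by omega
      rw [chain_succ, ← mul_assoc, ih h', mul_assoc, chain_slide s L l (by omega) hn,
        chain_succ]
      have e : s + l + 1 = s + 1 + l := by omega
      rw [e, mul_assoc]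

/-- conjugating a smaller twist by a chain shifts it up -/
lemma chain_conj_twist (s L m : ℕ) (h : m ≤ L) (hn : s + L + 1 ≤ n) :
    chain n s L * twist n s m = twist n (s+1) m * chain n s L := by
  induction m with
  | zero => simp
  | succ m ih =>
      rw [twist_succ, ← mul_assoc, chain_conj_chain s L m (by omega) hn, mul_assoc,
        ih (by omega), twist_succ, mul_assoc]

/-- peel the half twist from inside: `Δ_{m+1} = Δ'_m ⬝ (σ_s ⋯ σ_{s+m-1})` -/
lemma twist_peel_in (s m : ℕ) (hn : s + m + 1 ≤ n) :
    twist n s (m+1) = twist n (s+1) m * chain n s m := by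
  rw [twist_succ, chain_conj_twist s m m le_rfl hn]

/-- peel the half twist from outside with a descending chain:
`Δ_{m+1} = Δ_m ⬝ (σ_{s+m-1} ⋯ σ_s)` -/
lemma twist_peel_out (s m : ℕ) (hn : s + m + 1 ≤ n) :
    twist n s (m+1) = twist n s m * dchain n s m := by
  induction m with
  | zero => simp [twist_succ]
  | succ m ih =>
      have hcomm : Commute (braidGen n (s+m)) (twist n s m) :=
        comm_gen_twist (s+m) s m (Or.inr (by omega))
      calc twist n s (m+1+1)
          = chain n s (m+1) * twist n s (m+1) := twist_succ s (m+1)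
        _ = (chain n s m * braidGen n (s+m)) * (twist n s m * dchain n s m) := by
            rw [chain_succ, ih (by omega)]
        _ = chain n s m * ((braidGen n (s+m) * twist n s m) * dchain n s m) := by group
        _ = chain n s m * ((twist n s m * braidGen n (s+m)) * dchain n s m) := by rw [hcomm.eq]
        _ = (chain n s m * twist n s m) * (braidGen n (s+m) * dchain n s m) := by group
        _ = twist n s (m+1) * dchain n s (m+1) := by rw [← twist_succ, ← dchain_cons]

/-- the half twist reverses generator indices -/
lemma twist_flip (s m i j : ℕ) (hij : i + j + 2 = m) (hn : s + m ≤ n) :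
    twist n s m * braidGen n (s+i) = braidGen n (s+j) * twist n s m := by
  induction m generalizing s i j with
  | zero => omega
  | succ m ih =>
      rcases Nat.eq_zero_or_pos j with hj | hj
      · subst hj
        rcases Nat.eq_zero_or_pos i with hi | hi
        · -- m+1 = 2
          subst hi
          have : m = 1 := by omega
          subst this
          rw [twist_succ, twist_succ]
          simp
        · -- i = m-1 ≥ 1, use peel_out
          obtain ⟨i', rfl⟩ : ∃ i', i = i' + 1 := ⟨i - 1, by omega⟩
          rw [twist_peel_out s m (by omega), mul_assoc,
            show s + (i'+1) = s + i' + 1 from by omega,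
            dchain_slide s m i' (by omega) (by omega), ← mul_assoc,
            ih s i' 0 (by omega) (by omega), mul_assoc,
            ← twist_peel_out s m (by omega)]
      · -- j ≥ 1, use peel_in
        obtain ⟨j', rfl⟩ : ∃ j', j = j' + 1 := ⟨j - 1, by omega⟩
        rw [twist_peel_in s m (by omega), mul_assoc,
          chain_slide s m i (by omega) (by omega), ← mul_assoc,
          show s + i + 1 = (s+1) + i from by omega,
          ih (s+1) i j' (by omega) (by omega), mul_assoc,
          ← twist_peel_in s m (by omega),
          show (s+1) + j' = s + (j'+1) from by omega]

/-- the half twist conjugates an ascending bottom chain to a descending one -/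
lemma twist_flip_chain (s m l c : ℕ) (h : l + c + 1 = m) (hn : s + m ≤ n) :
    twist n s m * chain n s l = dchain n (s+c) l * twist n s m := by
  induction l generalizing c with
  | zero => simp
  | succ l ih =>
      rw [chain_succ, ← mul_assoc, ih (c+1) (by omega), mul_assoc,
        twist_flip s m l c (by omega) hn, ← mul_assoc,
        show s + (c+1) = (s+c) + 1 from by omega, ← dchain_snoc]

/-- the half twist conjugates a descending bottom chain to an ascending one -/
lemma twist_flip_dchain (s m l c : ℕ) (h : l + c + 1 = m) (hn : s + m ≤ n) :
    twist n s m * dchain n s l = chain n (s+c) l * twist n s m := by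
  induction l generalizing c with
  | zero => simp
  | succ l ih =>
      rw [dchain_cons, ← mul_assoc, twist_flip s m l c (by omega) hn, mul_assoc,
        ih (c+1) (by omega), ← mul_assoc,
        show s + (c+1) = (s+c) + 1 from by omega, ← chain_cons]



/-- hill = valley: `(σ_{s+l}⋯σ_{s+1})(σ_s σ_{s+1}⋯σ_{s+l}) = (σ_s⋯σ_{s+l})(σ_{s+l-1}⋯σ_s)` -/
lemma hill_valley (s l : ℕ) (hn : s + l + 2 ≤ n) :
    dchain n (s+1) l * chain n s (l+1) = chain n s (l+1) * dchain n s l := by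
  induction l with
  | zero => simp
  | succ l ih =>
      have hb := braid_braid (n := n) (s+l) (by omega)
      have hc1 : Commute (braidGen n (s+l+1)) (dchain n s l) :=
        comm_gen_dchain (s+l+1) s l (Or.inr (by omega))
      have hc2 : Commute (braidGen n (s+l+1)) (chain n s l) :=
        comm_gen_chain (s+l+1) s l (Or.inr (by omega))
      calc dchain n (s+1) (l+1) * chain n s (l+1+1)
          = braidGen n (s+l+1) * ((dchain n (s+1) l * chain n s (l+1)) * braidGen n (s+l+1)) := by
            rw [dchain_cons, chain_succ]
            show braidGen n (s+1+l) * dchain n (s+1) l * (chain n s (l+1) * braidGen n (s+(l+1))) = _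
            have e1 : s + 1 + l = s + l + 1 := by omega
            have e2 : s + (l+1) = s + l + 1 := by omega
            rw [e1, e2]; group
        _ = braidGen n (s+l+1) * ((chain n s (l+1) * dchain n s l) * braidGen n (s+l+1)) := by
            rw [ih (by omega)]
        _ = braidGen n (s+l+1) * (chain n s (l+1) * (braidGen n (s+l+1) * dchain n s l)) := by
            rw [mul_assoc, hc1.eq]
        _ = (chain n s l) * (braidGen n (s+l+1) * braidGen n (s+l) * braidGen n (s+l+1)) *
              dchain n s l := by
            rw [chain_succ]
            rw [← mul_assoc, ← mul_assoc (braidGen n (s+l+1)) (chain n s l) (braidGen n (s+l)),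
              hc2.eq]
            group
        _ = (chain n s l) * (braidGen n (s+l) * braidGen n (s+l+1) * braidGen n (s+l)) *
              dchain n s l := by rw [← hb]
        _ = chain n s (l+1+1) * dchain n s (l+1) := by
            rw [chain_succ, chain_succ, dchain_cons]
            have e2 : s + (l+1) = s + l + 1 := by omega
            rw [e2]; group

/-- valley = hill, shifted: `(σ_s⋯σ_{s+l})(σ_{s+l-1}⋯σ_s)` commutation variant -/
lemma valley_hill (s l : ℕ) (hn : s + l + 2 ≤ n) :
    chain n s (l+1) * dchain n s l = dchain n s (l+1) * chain n (s+1) l := by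
  induction l with
  | zero => simp
  | succ l ih =>
      have hc1 : Commute (braidGen n (s+l+1)) (dchain n s l) :=
        comm_gen_dchain (s+l+1) s l (Or.inr (by omega))
      calc chain n s (l+1+1) * dchain n s (l+1)
          = chain n s (l+2) * braidGen n (s+l) * dchain n s l := by
            rw [dchain_cons]; group
        _ = braidGen n (s+l+1) * chain n s (l+2) * dchain n s l := by
            rw [chain_slide s (l+2) l (by omega) (by omega)]
        _ = braidGen n (s+l+1) * ((chain n s (l+1) * dchain n s l) * braidGen n (s+l+1)) := by
            rw [chain_succ (s := s) (l := l+1)]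
            have e2 : s + (l+1) = s + l + 1 := by omega
            rw [e2, mul_assoc, mul_assoc, mul_assoc, ← hc1.eq]
        _ = braidGen n (s+l+1) * ((dchain n s (l+1) * chain n (s+1) l) * braidGen n (s+l+1)) := by
            rw [ih (by omega)]
        _ = dchain n s (l+1+1) * chain n (s+1) (l+1) := by
            rw [dchain_cons (s := s) (l := l+1), chain_succ (s := s+1) (l := l)]
            have e2 : s + (l+1) = s + l + 1 := by omega
            have e3 : s + 1 + l = s + l + 1 := by omega
            rw [e2, e3]; group

/-- partial products of the full-twist expansion -/
def pref (n s L j : ℕ) : BraidGroup n :=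
  ((List.range j).map (fun i => chain n s (L-i))).prod

lemma pref_succ (s L j : ℕ) : pref n s L (j+1) = pref n s L j * chain n s (L-j) := by
  unfold pref
  rw [List.range_succ, List.map_append, List.prod_append]
  simp

lemma pref_eq_twist (s L : ℕ) : pref n s L L = twist n s (L+1) := by
  unfold pref twist
  congr 1

/-- power of the full chain: `δ^j = (δ_L δ_{L-1} ⋯ δ_{L-j+1}) ⬝ Δ` -/
lemma chain_pow (s L j : ℕ) (hj : j ≤ L + 1) (hn : s + L + 1 ≤ n) :
    chain n s L ^ j = pref n s L j * twist n (s+(L+1-j)) j := by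
  induction j with
  | zero => simp [pref]
  | succ j ih =>
      have hQ : twist n (s+(L-j)+1) j * chain n s L
          = chain n s (L-j) * twist n (s+(L-j)) (j+1) := by
        have hsplit : chain n s L = chain n s (L-j) * chain n (s+(L-j)) j := by
          rw [← chain_append]; congr 1; omega
        have hcomm : Commute (twist n (s+(L-j)+1) j) (chain n s (L-j)) := by
          apply (comm_chain_twist s (L-j) (s+(L-j)+1) j (Or.inl (by omega))).symm
        rw [hsplit, ← mul_assoc, hcomm.eq, mul_assoc, ← twist_peel_in (s+(L-j)) j (by omega)]
      rw [pow_succ, ih (by omega), pref_succ]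
      have e : s + (L+1-j) = s + (L-j) + 1 := by omega
      rw [e, mul_assoc, hQ, ← mul_assoc]
      congr 3
      omega

/-- the full twist on `L+1` strands is the square of the half twist -/
lemma fulltwist (s L : ℕ) (hn : s + L + 1 ≤ n) :
    chain n s L ^ (L+1) = twist n s (L+1) * twist n s (L+1) := by
  rw [chain_pow s L (L+1) le_rfl hn]
  congr 1
  · rw [← pref_eq_twist, pref_succ, Nat.sub_self]
    simp
  · congr 1
    omega

/-- `δ^j = Δ_{full} ⬝ Δ_{upper}` on a block: the case `j = L` -/
lemma chain_pow_block (s L : ℕ) (hn : s + L + 1 ≤ n) :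
    chain n s L ^ L = twist n s (L+1) * twist n (s+1) L := by
  rw [chain_pow s L L (by omega) hn, pref_eq_twist]
  congr 2
  omega



/-- The key recursion: the quasipositive defect of two size-`(j+1)` blocks equals that
of two size-`j` blocks times one band generator. -/
lemma main_rec (s j : ℕ) (hn : s + 2*j + 2 ≤ n) :
    twist n s (2*j+2) * (twist n s (j+1))⁻¹ * (twist n s (j+1))⁻¹
      * (twist n (s+j+1) (j+1))⁻¹ * (twist n (s+j+1) (j+1))⁻¹
    = twist n (s+1) (2*j) * (twist n (s+1) j)⁻¹ * (twist n (s+1) j)⁻¹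
      * (twist n (s+j+1) j)⁻¹ * (twist n (s+j+1) j)⁻¹
      * ((chain n s j * dchain n (s+j+1) j) * braidGen n (s+j)
          * (chain n s j * dchain n (s+j+1) j)⁻¹) := by
  -- abbreviations
  have hA : twist n s (2*j+2) = twist n (s+1) (2*j) *
      (dchain n (s+1) (2*j) * chain n s (2*j+1)) := by
    have h1 : twist n s (2*j+1+1) = twist n (s+1) (2*j+1) * chain n s (2*j+1) :=
      twist_peel_in s (2*j+1) (by omega)
    have h2 : twist n (s+1) (2*j+1) = twist n (s+1) (2*j) * dchain n (s+1) (2*j) :=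
      twist_peel_out (s+1) (2*j) (by omega)
    calc twist n s (2*j+2) = twist n (s+1) (2*j+1) * chain n s (2*j+1) := h1
      _ = twist n (s+1) (2*j) * (dchain n (s+1) (2*j) * chain n s (2*j+1)) := by
          rw [h2]; group
  -- the chain identity (♠★)
  have hsplit_c : chain n s (2*j+1) = chain n s j * chain n (s+j) (j+1) := by
    have h := chain_append (n := n) s j (j+1)
    rw [show j + (j+1) = 2*j+1 from by omega] at h
    exact h
  have hsplit_d : dchain n s (2*j) = dchain n (s+j) j * dchain n s j := by
    have h := dchain_append (n := n) s j j
    rw [show j + j = 2*j from by omega] at h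
    exact h
  have hcomm_c2d1 : Commute (chain n (s+j+1) j) (dchain n s j) :=
    comm_chain_dchain (s+j+1) j s j (Or.inr (by omega))
  have hM : dchain n (s+1) (2*j) * chain n s (2*j+1)
      = chain n s j * (dchain n (s+j+1) j * braidGen n (s+j)) * dchain n s j *
        chain n (s+j+1) j := by
    have hsnoc : dchain n (s+j) (j+1) = dchain n (s+j+1) j * braidGen n (s+j) :=
      dchain_snoc (s+j) j
    calc dchain n (s+1) (2*j) * chain n s (2*j+1)
        = chain n s (2*j+1) * dchain n s (2*j) := hill_valley s (2*j) (by omega)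
      _ = (chain n s j * chain n (s+j) (j+1)) * (dchain n (s+j) j * dchain n s j) := by
          rw [hsplit_c, hsplit_d]
      _ = chain n s j * ((chain n (s+j) (j+1) * dchain n (s+j) j) * dchain n s j) := by
          group
      _ = chain n s j * ((dchain n (s+j) (j+1) * chain n (s+j+1) j) * dchain n s j) := by
          rw [valley_hill (s+j) j (by omega)]
      _ = chain n s j * dchain n (s+j) (j+1) * (chain n (s+j+1) j * dchain n s j) := by
          group
      _ = chain n s j * dchain n (s+j) (j+1) * (dchain n s j * chain n (s+j+1) j) := by
          rw [hcomm_c2d1.eq]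
      _ = chain n s j * (dchain n (s+j+1) j * braidGen n (s+j)) * dchain n s j *
            chain n (s+j+1) j := by
          rw [hsnoc]; group
  -- block 1 square identity
  have hG1 : twist n s (j+1) = twist n (s+1) j * chain n s j := twist_peel_in s j (by omega)
  have flip1c : twist n s (j+1) * chain n s j = dchain n s j * twist n s (j+1) := by
    have h := twist_flip_chain (n := n) s (j+1) j 0 (by omega) (by omega)
    rwa [Nat.add_zero] at h
  have hP1 : twist n s (j+1) * twist n s (j+1)
      = chain n s j * dchain n s j * (twist n (s+1) j * twist n (s+1) j) := by
    have e : dchain n s j = twist n s (j+1) * chain n s j * (twist n s (j+1))⁻¹ := by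
      rw [flip1c]; group
    have hD1i : (twist n s (j+1))⁻¹ * twist n (s+1) j = (chain n s j)⁻¹ := by
      rw [hG1]; group
    have hd1E : dchain n s j * (twist n (s+1) j * twist n (s+1) j)
        = twist n s (j+1) * twist n (s+1) j := by
      calc dchain n s j * (twist n (s+1) j * twist n (s+1) j)
          = twist n s (j+1) * chain n s j *
              ((twist n s (j+1))⁻¹ * twist n (s+1) j) * twist n (s+1) j := by
            rw [e]; group
        _ = twist n s (j+1) * chain n s j * (chain n s j)⁻¹ * twist n (s+1) j := by
            rw [hD1i]
        _ = twist n s (j+1) * twist n (s+1) j := by group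
    calc twist n s (j+1) * twist n s (j+1)
        = chain n s j ^ (j+1) := (fulltwist (n := n) s j (by omega)).symm
      _ = chain n s j * chain n s j ^ j := by rw [pow_succ']
      _ = chain n s j * (twist n s (j+1) * twist n (s+1) j) := by
          rw [chain_pow_block (n := n) s j (by omega)]
      _ = chain n s j * (dchain n s j * (twist n (s+1) j * twist n (s+1) j)) := by
          rw [hd1E]
      _ = chain n s j * dchain n s j * (twist n (s+1) j * twist n (s+1) j) := by group
  -- block 2 square identity
  have hG2 : twist n (s+j+1) (j+1) = chain n (s+j+1) j * twist n (s+j+1) j :=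
    twist_succ (s+j+1) j
  have flip2c : twist n (s+j+1) (j+1) * chain n (s+j+1) j
      = dchain n (s+j+1) j * twist n (s+j+1) (j+1) := by
    have h := twist_flip_chain (n := n) (s+j+1) (j+1) j 0 (by omega) (by omega)
    rwa [Nat.add_zero] at h
  have hP2 : twist n (s+j+1) (j+1) * twist n (s+j+1) (j+1)
      = dchain n (s+j+1) j * chain n (s+j+1) j *
        (twist n (s+j+1) j * twist n (s+j+1) j) := by
    calc twist n (s+j+1) (j+1) * twist n (s+j+1) (j+1)
        = twist n (s+j+1) (j+1) * (chain n (s+j+1) j * twist n (s+j+1) j) := by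
          rw [← hG2]
      _ = (twist n (s+j+1) (j+1) * chain n (s+j+1) j) * twist n (s+j+1) j := by group
      _ = dchain n (s+j+1) j * twist n (s+j+1) (j+1) * twist n (s+j+1) j := by
          rw [flip2c]
      _ = dchain n (s+j+1) j * (chain n (s+j+1) j * twist n (s+j+1) j) *
            twist n (s+j+1) j := by rw [hG2]
      _ = dchain n (s+j+1) j * chain n (s+j+1) j *
            (twist n (s+j+1) j * twist n (s+j+1) j) := by group
  -- commutation of M with the sub-twists
  have hMgen : ∀ i, i + 2 ≤ 2*j →
      (dchain n (s+1) (2*j) * chain n s (2*j+1)) * braidGen n (s+i+1)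
        = braidGen n (s+i+1) * (dchain n (s+1) (2*j) * chain n s (2*j+1)) := by
    intro i hi
    have h1 := chain_slide (n := n) s (2*j+1) (i+1) (by omega) (by omega)
    simp only [Nat.add_succ] at h1
    have h2 := dchain_slide (n := n) (s+1) (2*j) i (by omega) (by omega)
    calc (dchain n (s+1) (2*j) * chain n s (2*j+1)) * braidGen n (s+i+1)
        = dchain n (s+1) (2*j) * (chain n s (2*j+1) * braidGen n (s+i+1)) := by group
      _ = dchain n (s+1) (2*j) * (braidGen n (s+i+1+1) * chain n s (2*j+1)) := by
          rw [h1]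
      _ = (dchain n (s+1) (2*j) * braidGen n (s+1+i+1)) * chain n s (2*j+1) := by
          rw [show s+1+i+1 = s+i+1+1 from by omega]; group
      _ = (braidGen n (s+1+i) * dchain n (s+1) (2*j)) * chain n s (2*j+1) := by
          rw [h2]
      _ = braidGen n (s+i+1) * (dchain n (s+1) (2*j) * chain n s (2*j+1)) := by
          rw [show s+1+i = s+i+1 from by omega]; group
  have hME1 : Commute (dchain n (s+1) (2*j) * chain n s (2*j+1)) (twist n (s+1) j) := by
    apply Commute.list_prod_right
    intro x hx
    simp only [List.mem_map, List.mem_range] at hx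
    obtain ⟨t, ht, rfl⟩ := hx
    apply Commute.list_prod_right
    intro y hy
    simp only [List.mem_map, List.mem_range] at hy
    obtain ⟨i, hi, rfl⟩ := hy
    show Commute _ (braidGen n (s+1+i))
    have := hMgen i (by omega)
    rw [show s+i+1 = s+1+i from by omega] at this
    exact this
  have hME2 : Commute (dchain n (s+1) (2*j) * chain n s (2*j+1)) (twist n (s+j+1) j) := by
    apply Commute.list_prod_right
    intro x hx
    simp only [List.mem_map, List.mem_range] at hx
    obtain ⟨t, ht, rfl⟩ := hx
    apply Commute.list_prod_right
    intro y hy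
    simp only [List.mem_map, List.mem_range] at hy
    obtain ⟨i, hi, rfl⟩ := hy
    show Commute _ (braidGen n (s+j+1+i))
    have := hMgen (j+i) (by omega)
    rw [show s+(j+i)+1 = s+j+1+i from by omega] at this
    exact this
  -- disjoint-block commutation facts
  have cc : Commute (chain n s j) (chain n (s+j+1) j) :=
    comm_chain_chain s j (s+j+1) j (Or.inl (by omega))
  have cd2 : Commute (chain n s j) (dchain n (s+j+1) j) :=
    comm_chain_dchain s j (s+j+1) j (Or.inl (by omega))
  have cE2 : Commute (chain n s j) (twist n (s+j+1) j) :=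
    comm_chain_twist s j (s+j+1) j (Or.inl (by omega))
  have dc2 : Commute (dchain n s j) (chain n (s+j+1) j) := hcomm_c2d1.symm
  have dd2 : Commute (dchain n s j) (dchain n (s+j+1) j) :=
    comm_dchain_dchain (s+j+1) j s j (Or.inr (by omega)) |>.symm
  have dE2 : Commute (dchain n s j) (twist n (s+j+1) j) :=
    comm_dchain_twist s j (s+j+1) j (Or.inl (by omega))
  -- the block identity
  have hu1 : Commute (chain n s j)⁻¹ ((twist n (s+j+1) j)⁻¹ * (twist n (s+j+1) j)⁻¹) :=
    ((cE2.inv_right.mul_right cE2.inv_right)).inv_left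
  have hu2 : Commute (dchain n s j)⁻¹ ((twist n (s+j+1) j)⁻¹ * (twist n (s+j+1) j)⁻¹) :=
    ((dE2.inv_right.mul_right dE2.inv_right)).inv_left
  have hc1c2 : Commute (chain n s j)⁻¹ (chain n (s+j+1) j)⁻¹ := cc.inv_left.inv_right
  have hc1d2 : Commute (chain n s j)⁻¹ (dchain n (s+j+1) j)⁻¹ := cd2.inv_left.inv_right
  have hd1c2 : Commute (dchain n s j)⁻¹ (chain n (s+j+1) j)⁻¹ := dc2.inv_left.inv_right
  have hX : (twist n s (j+1))⁻¹ * (twist n s (j+1))⁻¹ *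
        ((twist n (s+j+1) (j+1))⁻¹ * (twist n (s+j+1) (j+1))⁻¹)
      = (twist n (s+1) j)⁻¹ * (twist n (s+1) j)⁻¹ *
        ((twist n (s+j+1) j)⁻¹ * (twist n (s+j+1) j)⁻¹) *
        ((chain n (s+j+1) j)⁻¹ * (dchain n s j)⁻¹ * (dchain n (s+j+1) j)⁻¹ *
          (chain n s j)⁻¹) := by
    have i1 : (twist n s (j+1))⁻¹ * (twist n s (j+1))⁻¹
        = (twist n (s+1) j * twist n (s+1) j)⁻¹ * (dchain n s j)⁻¹ * (chain n s j)⁻¹ := by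
      rw [show ((twist n s (j+1))⁻¹ * (twist n s (j+1))⁻¹ : BraidGroup n)
          = (twist n s (j+1) * twist n s (j+1))⁻¹ from by group, hP1]
      group
    have i2 : (twist n (s+j+1) (j+1))⁻¹ * (twist n (s+j+1) (j+1))⁻¹
        = (twist n (s+j+1) j * twist n (s+j+1) j)⁻¹ * (chain n (s+j+1) j)⁻¹ *
          (dchain n (s+j+1) j)⁻¹ := by
      rw [show ((twist n (s+j+1) (j+1))⁻¹ * (twist n (s+j+1) (j+1))⁻¹ : BraidGroup n)
          = (twist n (s+j+1) (j+1) * twist n (s+j+1) (j+1))⁻¹ from by group, hP2]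
      group
    rw [i1, i2]
    -- now a pure shuffle
    calc (twist n (s+1) j * twist n (s+1) j)⁻¹ * (dchain n s j)⁻¹ * (chain n s j)⁻¹ *
          ((twist n (s+j+1) j * twist n (s+j+1) j)⁻¹ * (chain n (s+j+1) j)⁻¹ *
            (dchain n (s+j+1) j)⁻¹)
        = (twist n (s+1) j)⁻¹ * (twist n (s+1) j)⁻¹ * ((dchain n s j)⁻¹ *
            (((chain n s j)⁻¹ * ((twist n (s+j+1) j)⁻¹ * (twist n (s+j+1) j)⁻¹)) *
              ((chain n (s+j+1) j)⁻¹ * (dchain n (s+j+1) j)⁻¹))) := by group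
      _ = (twist n (s+1) j)⁻¹ * (twist n (s+1) j)⁻¹ * ((dchain n s j)⁻¹ *
            ((((twist n (s+j+1) j)⁻¹ * (twist n (s+j+1) j)⁻¹) * (chain n s j)⁻¹) *
              ((chain n (s+j+1) j)⁻¹ * (dchain n (s+j+1) j)⁻¹))) := by rw [hu1.eq]
      _ = (twist n (s+1) j)⁻¹ * (twist n (s+1) j)⁻¹ *
            (((dchain n s j)⁻¹ * ((twist n (s+j+1) j)⁻¹ * (twist n (s+j+1) j)⁻¹)) *
              (((chain n s j)⁻¹ * (chain n (s+j+1) j)⁻¹) * (dchain n (s+j+1) j)⁻¹)) := by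
          group
      _ = (twist n (s+1) j)⁻¹ * (twist n (s+1) j)⁻¹ *
            ((((twist n (s+j+1) j)⁻¹ * (twist n (s+j+1) j)⁻¹) * (dchain n s j)⁻¹) *
              (((chain n (s+j+1) j)⁻¹ * (chain n s j)⁻¹) * (dchain n (s+j+1) j)⁻¹)) := by
          rw [hu2.eq, hc1c2.eq]
      _ = (twist n (s+1) j)⁻¹ * (twist n (s+1) j)⁻¹ *
            (((twist n (s+j+1) j)⁻¹ * (twist n (s+j+1) j)⁻¹) *
              (((dchain n s j)⁻¹ * (chain n (s+j+1) j)⁻¹) *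
                ((chain n s j)⁻¹ * (dchain n (s+j+1) j)⁻¹))) := by group
      _ = (twist n (s+1) j)⁻¹ * (twist n (s+1) j)⁻¹ *
            (((twist n (s+j+1) j)⁻¹ * (twist n (s+j+1) j)⁻¹) *
              (((chain n (s+j+1) j)⁻¹ * (dchain n s j)⁻¹) *
                ((dchain n (s+j+1) j)⁻¹ * (chain n s j)⁻¹))) := by
          rw [hd1c2.eq, hc1d2.eq]
      _ = (twist n (s+1) j)⁻¹ * (twist n (s+1) j)⁻¹ *
            ((twist n (s+j+1) j)⁻¹ * (twist n (s+j+1) j)⁻¹) *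
            ((chain n (s+j+1) j)⁻¹ * (dchain n s j)⁻¹ * (dchain n (s+j+1) j)⁻¹ *
              (chain n s j)⁻¹) := by group
  -- band from M
  have hBand : (dchain n (s+1) (2*j) * chain n s (2*j+1)) *
        ((chain n (s+j+1) j)⁻¹ * (dchain n s j)⁻¹ * (dchain n (s+j+1) j)⁻¹ *
          (chain n s j)⁻¹)
      = (chain n s j * dchain n (s+j+1) j) * braidGen n (s+j) *
        (chain n s j * dchain n (s+j+1) j)⁻¹ := by
    rw [hM]
    group
  have hMEE : Commute (dchain n (s+1) (2*j) * chain n s (2*j+1))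
      ((twist n (s+1) j)⁻¹ * (twist n (s+1) j)⁻¹ *
        ((twist n (s+j+1) j)⁻¹ * (twist n (s+j+1) j)⁻¹)) :=
    (hME1.inv_right.mul_right hME1.inv_right).mul_right
      (hME2.inv_right.mul_right hME2.inv_right)
  -- final assembly
  calc twist n s (2*j+2) * (twist n s (j+1))⁻¹ * (twist n s (j+1))⁻¹
        * (twist n (s+j+1) (j+1))⁻¹ * (twist n (s+j+1) (j+1))⁻¹
      = twist n (s+1) (2*j) * ((dchain n (s+1) (2*j) * chain n s (2*j+1)) *
          ((twist n s (j+1))⁻¹ * (twist n s (j+1))⁻¹ *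
            ((twist n (s+j+1) (j+1))⁻¹ * (twist n (s+j+1) (j+1))⁻¹))) := by
        rw [hA]; group
    _ = twist n (s+1) (2*j) * ((dchain n (s+1) (2*j) * chain n s (2*j+1)) *
          ((twist n (s+1) j)⁻¹ * (twist n (s+1) j)⁻¹ *
            ((twist n (s+j+1) j)⁻¹ * (twist n (s+j+1) j)⁻¹) *
            ((chain n (s+j+1) j)⁻¹ * (dchain n s j)⁻¹ * (dchain n (s+j+1) j)⁻¹ *
              (chain n s j)⁻¹))) := by rw [hX]
    _ = twist n (s+1) (2*j) * (((dchain n (s+1) (2*j) * chain n s (2*j+1)) *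
          ((twist n (s+1) j)⁻¹ * (twist n (s+1) j)⁻¹ *
            ((twist n (s+j+1) j)⁻¹ * (twist n (s+j+1) j)⁻¹))) *
            ((chain n (s+j+1) j)⁻¹ * (dchain n s j)⁻¹ * (dchain n (s+j+1) j)⁻¹ *
              (chain n s j)⁻¹)) := by group
    _ = twist n (s+1) (2*j) * ((((twist n (s+1) j)⁻¹ * (twist n (s+1) j)⁻¹ *
            ((twist n (s+j+1) j)⁻¹ * (twist n (s+j+1) j)⁻¹)) *
          (dchain n (s+1) (2*j) * chain n s (2*j+1))) *
            ((chain n (s+j+1) j)⁻¹ * (dchain n s j)⁻¹ * (dchain n (s+j+1) j)⁻¹ *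
              (chain n s j)⁻¹)) := by rw [hMEE.eq]
    _ = twist n (s+1) (2*j) * ((twist n (s+1) j)⁻¹ * (twist n (s+1) j)⁻¹ *
            ((twist n (s+j+1) j)⁻¹ * (twist n (s+j+1) j)⁻¹)) *
          ((dchain n (s+1) (2*j) * chain n s (2*j+1)) *
            ((chain n (s+j+1) j)⁻¹ * (dchain n s j)⁻¹ * (dchain n (s+j+1) j)⁻¹ *
              (chain n s j)⁻¹)) := by group
    _ = twist n (s+1) (2*j) * (twist n (s+1) j)⁻¹ * (twist n (s+1) j)⁻¹
          * (twist n (s+j+1) j)⁻¹ * (twist n (s+j+1) j)⁻¹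
          * ((chain n s j * dchain n (s+j+1) j) * braidGen n (s+j) *
              (chain n s j * dchain n (s+j+1) j)⁻¹) := by
        rw [hBand]; group



/-- the `b`-th band generator -/
def band (n k b : ℕ) : BraidGroup n :=
  (chain n (k-b) (b-1) * dchain n k (b-1)) * braidGen n (k-1) *
    (chain n (k-b) (b-1) * dchain n k (b-1))⁻¹

lemma prod_band (k : ℕ) (hn : 2*k ≤ n) :
    ∀ b, b ≤ k → ((List.range b).map (fun i => band n k (i+1))).prod
      = twist n (k-b) (2*b) * (twist n (k-b) b)⁻¹ * (twist n (k-b) b)⁻¹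
        * (twist n k b)⁻¹ * (twist n k b)⁻¹ := by
  intro b
  induction b with
  | zero => simp
  | succ b ih =>
      intro hb
      have hrec := main_rec (n := n) (k-b-1) b (by omega)
      rw [show k-b-1+b = k-1 from by omega, show k-1+1 = k from by omega,
        show k-b-1+1 = k-b from by omega] at hrec
      have hband : band n k (b+1)
          = (chain n (k-b-1) b * dchain n k b) * braidGen n (k-1) *
            (chain n (k-b-1) b * dchain n k b)⁻¹ := by
        unfold band
        rw [show k-(b+1) = k-b-1 from by omega]
        simp only [Nat.add_sub_cancel]
      rw [List.range_succ, List.map_append, List.prod_append]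
      simp only [List.map_cons, List.map_nil, List.prod_cons, List.prod_nil, mul_one]
      rw [ih (by omega), hband]
      rw [show k-(b+1) = k-b-1 from by omega, show 2*(b+1) = 2*b+2 from by omega]
      rw [hrec]

lemma braidChain_eq (l : ℕ) : braidChain n l = chain n 0 l := by
  unfold braidChain chain
  congr 1
  apply List.map_congr_left
  intro i _
  congr 1
  omega

lemma garside_eq : garside n = twist n 0 n := by
  unfold garside twist
  congr 1
  apply List.map_congr_left
  intro j _
  rw [braidChain_eq]

end BraidQP

/-- Braid-level content of Proposition 3.1: with `k = 2g'+2` and `n = 2k`, the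
braid `Δ_n · T₁⁻¹ · T₂⁻¹` — the Garside half-twist times the inverses of the full
twists `T₁ = (σ₁ ⋯ σ_{k-1})^k` and `T₂ = (σ_{k+1} ⋯ σ_{n-1})^k` on the first and
last `k` strands — is quasipositive: it is a product of `k` conjugates of
standard generators. -/
theorem garside_quasipositive (g' : ℕ) :
    ∃ l : List (BraidGroup (4 * g' + 4)),
      l.length = 2 * g' + 2 ∧
      (∀ x ∈ l, ∃ (i : Fin (4 * g' + 4 - 1)) (g : BraidGroup (4 * g' + 4)),
        x = g * PresentedGroup.of i * g⁻¹) ∧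
      l.prod = garside (4 * g' + 4) *
          (braidChain (4 * g' + 4) (2 * g' + 2 - 1) ^ (2 * g' + 2))⁻¹ *
          ((((List.range (2 * g' + 2 - 1)).map fun i =>
              braidGen (4 * g' + 4) (2 * g' + 2 + i)).prod ^ (2 * g' + 2)))⁻¹ := by
  open BraidQP in
  set n := 4 * g' + 4 with hn
  set k := 2 * g' + 2 with hk
  refine ⟨(List.range k).map (fun i => band n k (i+1)), by simp, ?_, ?_⟩
  · intro x hx
    simp only [List.mem_map, List.mem_range] at hx
    obtain ⟨i, hi, rfl⟩ := hx
    refine ⟨⟨k-1, by omega⟩, chain n (k-(i+1)) i * dchain n k i, ?_⟩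
    have hgen : braidGen n (k-1) = PresentedGroup.of (⟨k-1, by omega⟩ : Fin (n-1)) := by
      unfold braidGen
      rw [dif_pos]
    unfold band
    simp only [Nat.add_sub_cancel]
    rw [hgen]
  · have hprod := prod_band (n := n) k (by omega) k le_rfl
    rw [Nat.sub_self] at hprod
    have hgar : garside n = twist n 0 (2*k) := by
      rw [garside_eq, show n = 2*k from by omega]
    have hT1 : braidChain n (k-1) ^ k = twist n 0 k * twist n 0 k := by
      rw [braidChain_eq]
      have h := fulltwist (n := n) 0 (k-1) (by omega)
      rw [show k-1+1 = k from by omega] at h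
      exact h
    have hT2 : (((List.range (k-1)).map fun i => braidGen n (k + i)).prod) ^ k
        = twist n k k * twist n k k := by
      have h2 : ((List.range (k-1)).map fun i => braidGen n (k + i)).prod
          = chain n k (k-1) := rfl
      rw [h2]
      have h := fulltwist (n := n) k (k-1) (by omega)
      rw [show k-1+1 = k from by omega] at h
      exact h
    rw [hprod, hgar, hT1, hT2]
    group
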